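/- Let A be a ring and I a two-sided ideal with I^k = 0. If A/I satisfies the Capelli identity c_m with m odd, then A satisfies the Capelli identity c_{km}. -/

import Mathlib

open Finset

/-- The evaluation of the Capelli polynomial
`c_m(x₁,…,x_m; y₁,…,y_m) = Σ_{π ∈ S_m} sgn(π) x_{π(1)} y₁ ⋯ x_{π(m)} y_m` on a ring. -/
def capelliEval {A : Type*} [Ring A] (m : ℕ) (x y : Fin m → A) : A :=
  ∑ π : Equiv.Perm (Fin m), (Equiv.Perm.sign π : ℤ) • (List.ofFn (fun i => x (π i) * y i)).prod

section aux

variable {A : Type*} [Ring A]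

private lemma listProd_smul : ∀ (k : ℕ) (ε : Fin k → ℤ) (q : Fin k → A),
    (List.ofFn fun b => ε b • q b).prod = (∏ b, ε b) • (List.ofFn q).prod
  | 0, ε, q => by simp
  | (k+1), ε, q => by
    rw [List.ofFn_succ, List.ofFn_succ, List.prod_cons, List.prod_cons,
      listProd_smul k, Fin.prod_univ_succ, smul_mul_assoc, mul_smul_comm, smul_smul]

private lemma listProd_sum {S : Type*} [Fintype S] : ∀ (k : ℕ) (F : Fin k → S → A),
    ∑ σ : Fin k → S, (List.ofFn fun b => F b (σ b)).prod
      = (List.ofFn fun b => ∑ s, F b s).prod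
  | 0, F => by simp
  | (k+1), F => by
    rw [Fintype.sum_equiv (Fin.consEquiv (fun _ : Fin (k + 1) => S)).symm
      (fun σ => (List.ofFn fun b => F b (σ b)).prod)
      (fun p => F 0 p.1 * (List.ofFn fun b => F b.succ (p.2 b)).prod)
      (fun σ => by
        show (List.ofFn fun b => F b (σ b)).prod
          = F 0 (σ 0) * (List.ofFn fun b => F b.succ (σ b.succ)).prod
        rw [List.ofFn_succ, List.prod_cons])]
    rw [Fintype.sum_prod_type, List.ofFn_succ, List.prod_cons, ← listProd_sum k]
    rw [Finset.sum_mul_sum]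

/-- Decompose a sum over a finite group into a double sum over cosets of a subgroup. -/
private lemma sum_group_decomp {G M : Type*} [Group G] [Fintype G] [AddCommMonoid M]
    (H : Subgroup G) [Fintype (G ⧸ H)] [Fintype H] (f : G → M) :
    ∑ g, f g = ∑ q : G ⧸ H, ∑ h : H, f (Quotient.out q * h) := by
  have hbij : Function.Bijective
      (fun p : (G ⧸ H) × H => Quotient.out p.1 * (p.2 : G)) := ?_
  · calc ∑ g, f g
        = ∑ p : (G ⧸ H) × H, f (Quotient.out p.1 * (p.2 : G)) :=
          (Fintype.sum_bijective _ hbij _ f (fun p => rfl)).symm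
      _ = ∑ q : G ⧸ H, ∑ h : H, f (Quotient.out q * h) := Fintype.sum_prod_type _
  constructor
  · rintro ⟨q, h⟩ ⟨q', h'⟩ hyp
    have hq : q = q' := by
      have e1 : (QuotientGroup.mk (Quotient.out q * (h : G)) : G ⧸ H) = q := by
        rw [QuotientGroup.mk_mul_of_mem _ h.2, QuotientGroup.out_eq']
      have e2 : (QuotientGroup.mk (Quotient.out q' * (h' : G)) : G ⧸ H) = q' := by
        rw [QuotientGroup.mk_mul_of_mem _ h'.2, QuotientGroup.out_eq']
      have hyp' : Quotient.out q * (h : G) = Quotient.out q' * (h' : G) := hyp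
      rw [← e1, ← e2, hyp']
    subst hq
    have : (h : G) = h' := mul_left_cancel hyp
    simp [Subtype.ext this]
  · intro g
    refine ⟨⟨QuotientGroup.mk g, ⟨(Quotient.out (QuotientGroup.mk g (s := H)))⁻¹ * g, ?_⟩⟩, ?_⟩
    · exact QuotientGroup.eq.mp (QuotientGroup.out_eq' (QuotientGroup.mk g (s := H)))
    · simp [mul_inv_cancel_left]

end aux

/-- Let `A` be a ring and `I` a two-sided ideal with `I^k = 0`.  If `A/I` satisfies the
Capelli identity `c_m` with `m` odd (i.e. every evaluation of `c_m` on `A` lies in `I`),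
then `A` satisfies the Capelli identity `c_{km}`. -/
theorem stmt_4 (A : Type*) [Ring A] (I : TwoSidedIdeal A) (k m : ℕ) (hk : 0 < k)
    (hI : ∀ f : Fin k → A, (∀ i, f i ∈ I) → (List.ofFn f).prod = 0)
    (hm : Odd m)
    (hquot : ∀ x y : Fin m → A, capelliEval m x y ∈ I) :
    ∀ x y : Fin (k * m) → A, capelliEval (k * m) x y = 0 := by
  classical
  intro x y
  set e : Fin k × Fin m ≃ Fin (k * m) := finProdFinEquiv with he_def
  -- the block-diagonal embedding of (S_m)^k into S_{km}
  set ψ : (Fin k → Equiv.Perm (Fin m)) → Equiv.Perm (Fin (k * m)) :=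
    fun σ => e.permCongr (Equiv.prodCongrRight σ) with hψ_def
  have hψ_mul : ∀ σ τ, ψ (σ * τ) = ψ σ * ψ τ := by
    intro σ τ
    ext j
    obtain ⟨⟨b, i⟩, rfl⟩ : ∃ p, e p = j := ⟨e.symm j, e.apply_symm_apply j⟩
    simp [hψ_def, Equiv.permCongr_apply, Equiv.Perm.mul_apply, Pi.mul_apply]
  have hψ_apply : ∀ σ (b : Fin k) (i : Fin m), ψ σ (e (b, i)) = e (b, σ b i) := by
    intro σ b i
    simp [hψ_def, Equiv.permCongr_apply]
  have hψ_inj : Function.Injective ψ := by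
    intro σ τ h
    funext b
    ext i
    have h1 : ψ σ (e (b, i)) = ψ τ (e (b, i)) := by rw [h]
    rw [hψ_apply, hψ_apply] at h1
    have h2 := ((Prod.mk.injEq _ _ _ _).mp (e.injective h1)).2
    exact congrArg Fin.val h2
  have hψ_sign : ∀ σ, Equiv.Perm.sign (ψ σ) = ∏ b, Equiv.Perm.sign (σ b) := by
    intro σ
    rw [hψ_def]
    rw [Equiv.Perm.sign_permCongr, Equiv.Perm.sign_prodCongrRight]
  -- index equality for the block decomposition of lists
  have he : ∀ (b : Fin k) (i : Fin m) (h : (b : ℕ) * m + (i : ℕ) < k * m),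
      (⟨(b : ℕ) * m + (i : ℕ), h⟩ : Fin (k * m)) = e (b, i) := by
    intro b i h
    apply Fin.ext
    simp [he_def, finProdFinEquiv]
    ring
  let ψhom : (Fin k → Equiv.Perm (Fin m)) →* Equiv.Perm (Fin (k * m)) :=
    MonoidHom.mk' ψ hψ_mul
  set H : Subgroup (Equiv.Perm (Fin (k * m))) := ψhom.range with hH_def
  set f : Equiv.Perm (Fin (k * m)) → A :=
    fun π => (Equiv.Perm.sign π : ℤ) • (List.ofFn (fun i => x (π i) * y i)).prod with hf_def
  have : capelliEval (k * m) x y = ∑ q : _ ⧸ H, ∑ h : H, f (Quotient.out q * h) :=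
    sum_group_decomp H f
  rw [this]
  apply Finset.sum_eq_zero
  intro q _
  set τ : Equiv.Perm (Fin (k * m)) := Quotient.out q with hτ_def
  -- reindex the sum over H by (S_m)^k
  have hbij : Function.Bijective
      (fun σ : Fin k → Equiv.Perm (Fin m) => (⟨ψ σ, ⟨σ, rfl⟩⟩ : H)) := by
    constructor
    · intro σ σ' hh
      exact hψ_inj (congrArg Subtype.val hh)
    · rintro ⟨-, σ, rfl⟩
      exact ⟨σ, rfl⟩
  rw [← Fintype.sum_bijective _ hbij (fun σ => f (τ * ψ σ)) (fun h => f (τ * h))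
    (fun σ => rfl)]
  -- compute each term
  have hterm : ∀ σ : Fin k → Equiv.Perm (Fin m),
      f (τ * ψ σ) = (Equiv.Perm.sign τ : ℤ) •
        (List.ofFn fun b : Fin k => ((Equiv.Perm.sign (σ b) : ℤ) •
          (List.ofFn fun i : Fin m =>
            x (τ (e (b, σ b i))) * y (e (b, i))).prod)).prod := by
    intro σ
    simp only [hf_def]
    have hsgn : ((Equiv.Perm.sign (τ * ψ σ) : ℤˣ) : ℤ)
        = (Equiv.Perm.sign τ : ℤ) * ∏ b, (Equiv.Perm.sign (σ b) : ℤ) := by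
      rw [map_mul, hψ_sign, Units.val_mul]
      congr 1
      exact map_prod (Units.coeHom ℤ) _ _
    have hlist : (List.ofFn fun i => x ((τ * ψ σ) i) * y i).prod
        = (List.ofFn fun b : Fin k =>
            (List.ofFn fun i : Fin m =>
              x (τ (e (b, σ b i))) * y (e (b, i))).prod).prod := by
      rw [List.ofFn_mul (fun i => x ((τ * ψ σ) i) * y i), List.prod_flatten,
        List.map_ofFn]
      simp only [Function.comp_def]
      refine congrArg List.prod (congrArg List.ofFn (funext fun b => ?_))
      refine congrArg List.prod (congrArg List.ofFn (funext fun i => ?_))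
      rw [he b i, Equiv.Perm.mul_apply, hψ_apply]
    rw [hsgn, hlist, listProd_smul, ← smul_smul]
  calc ∑ σ : Fin k → Equiv.Perm (Fin m), f (τ * ψ σ)
      = ∑ σ : Fin k → Equiv.Perm (Fin m), (Equiv.Perm.sign τ : ℤ) •
        (List.ofFn fun b : Fin k => ((Equiv.Perm.sign (σ b) : ℤ) •
          (List.ofFn fun i : Fin m =>
            x (τ (e (b, σ b i))) * y (e (b, i))).prod)).prod :=
        Finset.sum_congr rfl (fun σ _ => hterm σ)
    _ = (Equiv.Perm.sign τ : ℤ) • ∑ σ : Fin k → Equiv.Perm (Fin m),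
        (List.ofFn fun b : Fin k => ((Equiv.Perm.sign (σ b) : ℤ) •
          (List.ofFn fun i : Fin m =>
            x (τ (e (b, σ b i))) * y (e (b, i))).prod)).prod := by
        rw [Finset.smul_sum]
    _ = (Equiv.Perm.sign τ : ℤ) •
        (List.ofFn fun b : Fin k => ∑ s : Equiv.Perm (Fin m),
          ((Equiv.Perm.sign s : ℤ) •
          (List.ofFn fun i : Fin m =>
            x (τ (e (b, s i))) * y (e (b, i))).prod)).prod := by
        rw [listProd_sum k (fun b s => (Equiv.Perm.sign s : ℤ) •
          (List.ofFn fun i : Fin m => x (τ (e (b, s i))) * y (e (b, i))).prod)]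
    _ = (Equiv.Perm.sign τ : ℤ) •
        (List.ofFn fun b : Fin k => capelliEval m
          (fun j => x (τ (e (b, j)))) (fun i => y (e (b, i)))).prod := by
        simp only [capelliEval]
    _ = 0 := by
        rw [hI (fun b => capelliEval m (fun j => x (τ (e (b, j)))) (fun i => y (e (b, i))))
          (fun b => hquot _ _), smul_zero]
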